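/- For every t ∈ (0,1) with t ≠ 1/3, the set Λ(t) = {λ ∈ (0,1/3] : t ∈ C_λ − C_λ} has empty interior: between any two points λ₁ < λ₂ of Λ(t) there is a point of (λ₁, λ₂) not in Λ(t). -/

import Mathlib

open scoped Pointwise

/-- `PiFun i λ = (1-λ) ∑_{n≥0} i_n λ^n`, the series Π from the paper (0-based indexing). -/
noncomputable def PiFun (i : ℕ → ℝ) (l : ℝ) : ℝ := (1 - l) * ∑' n : ℕ, i n * l ^ n

/-- `i` is a sequence over the alphabet `{-1,0,1}`. -/
def IsCoding (i : ℕ → ℝ) : Prop := ∀ n, i n = -1 ∨ i n = 0 ∨ i n = 1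

/-- Strict lexicographic order on sequences. -/
def LexLt (i j : ℕ → ℝ) : Prop := ∃ m, (∀ n, n < m → i n = j n) ∧ i m < j m

/-- Non-strict lexicographic order on sequences. -/
def LexLe (i j : ℕ → ℝ) : Prop := LexLt i j ∨ i = j

-- `rho i j = 3^{-k}` where `k` is the first (0-based) index at which the sequences differ
-- (this equals `3^{1-k}` for 1-based indexing as in the paper).
open Classical in
noncomputable def rho (i j : ℕ → ℝ) : ℝ :=
  if i = j then 0 else (3 : ℝ) ^ (-((sInf {n : ℕ | i n ≠ j n} : ℕ) : ℤ))

/-- The middle-`(1-2λ)` Cantor set `C_λ`. -/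
def Cset (l : ℝ) : Set ℝ :=
  {x | ∃ i : ℕ → ℝ, (∀ n, i n = 0 ∨ i n = 1) ∧ x = (1 - l) * ∑' n : ℕ, i n * l ^ n}

/-- `Λ(t) = {λ ∈ (0,1/3] : t ∈ C_λ - C_λ}`. -/
def Lam (t : ℝ) : Set ℝ := {l | l ∈ Set.Ioc (0 : ℝ) (1/3) ∧ t ∈ Cset l - Cset l}

/-! ### Auxiliary lemmas -/

lemma IsCoding.abs_le {i : ℕ → ℝ} (hi : IsCoding i) (n : ℕ) : |i n| ≤ 1 := by
  rcases hi n with h | h | h <;> rw [h] <;> norm_num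

lemma summable_coding {i : ℕ → ℝ} (hb : ∀ n, |i n| ≤ 1) {l : ℝ} (h0 : 0 ≤ l) (h1 : l < 1) :
    Summable fun n => i n * l ^ n := by
  apply Summable.of_norm_bounded (summable_geometric_of_lt_one h0 h1)
  intro n
  rw [Real.norm_eq_abs, abs_mul, abs_pow, abs_of_nonneg h0]
  have h := hb n
  have h2 : (0:ℝ) ≤ l ^ n := pow_nonneg h0 n
  nlinarith [abs_nonneg (i n)]

lemma exists_coding {t l : ℝ} (hl0 : 0 < l) (hl1 : l < 1)
    (h : t ∈ Cset l - Cset l) : ∃ i, IsCoding i ∧ PiFun i l = t := by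
  rw [Set.mem_sub] at h
  obtain ⟨x, hx, y, hy, hxy⟩ := h
  obtain ⟨a, ha, hax⟩ := hx
  obtain ⟨b, hb, hby⟩ := hy
  refine ⟨fun n => a n - b n, ?_, ?_⟩
  · intro n
    rcases ha n with h1 | h1 <;> rcases hb n with h2 | h2 <;> simp [h1, h2]
  · have hab : ∀ (c : ℕ → ℝ), (∀ n, c n = 0 ∨ c n = 1) → ∀ n, |c n| ≤ 1 := by
      intro c hc n; rcases hc n with h1 | h1 <;> rw [h1] <;> norm_num
    have hsa := summable_coding (hab a ha) hl0.le hl1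
    have hsb := summable_coding (hab b hb) hl0.le hl1
    have : (∑' n : ℕ, (a n - b n) * l ^ n) = (∑' n, a n * l ^ n) - ∑' n, b n * l ^ n := by
      rw [← Summable.tsum_sub hsa hsb]
      exact tsum_congr fun n => by ring
    rw [PiFun, this, mul_sub, ← hax, ← hby, hxy]

/-- Separation: two codings differing first at index `k` give values at least
`l^k (1-3l)` apart. -/
lemma sep {i j : ℕ → ℝ} (hi : IsCoding i) (hj : IsCoding j) {k : ℕ}
    (hk : ∀ n, n < k → i n = j n) (hne : i k ≠ j k) {l : ℝ} (hl0 : 0 < l) (hl3 : l < 1/3) :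
    l ^ k * (1 - 3 * l) ≤ |PiFun i l - PiFun j l| := by
  have hl1 : l < 1 := by linarith
  have hsi := summable_coding hi.abs_le hl0.le hl1
  have hsj := summable_coding hj.abs_le hl0.le hl1
  set F : ℕ → ℝ := fun n => (i n - j n) * l ^ n with hF
  have hsF : Summable F := by
    have := hsi.sub hsj
    apply this.congr
    intro n; simp [hF]; ring
  have hdiff : PiFun i l - PiFun j l = (1 - l) * ∑' n, F n := by
    rw [PiFun, PiFun, ← mul_sub, ← Summable.tsum_sub hsi hsj]
    congr 1
    exact tsum_congr fun n => by simp [hF]; ring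
  have hsplit : (∑ n ∈ Finset.range (k+1), F n) + ∑' n, F (n + (k+1)) = ∑' n, F n :=
    Summable.sum_add_tsum_nat_add (k+1) hsF
  have hhead : (∑ n ∈ Finset.range (k+1), F n) = F k := by
    apply Finset.sum_eq_single_of_mem k (Finset.self_mem_range_succ k)
    intro n hn hnk
    have : n < k := by
      have := Finset.mem_range.mp hn; omega
    simp [hF, hk n this]
  have habs1 : 1 ≤ |i k - j k| := by
    rcases hi k with h1 | h1 | h1 <;> rcases hj k with h2 | h2 | h2 <;>
      rw [h1, h2] <;> first
        | (exfalso; exact hne (h1.trans h2.symm))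
        | norm_num
  have hFk : l ^ k ≤ |F k| := by
    rw [hF, abs_mul, abs_pow, abs_of_nonneg hl0.le]
    nlinarith [pow_pos hl0 k]
  have htail : |∑' n, F (n + (k+1))| ≤ 2 * l ^ (k+1) * (1 - l)⁻¹ := by
    have hgs : HasSum (fun n : ℕ => 2 * l ^ (k+1) * l ^ n) (2 * l ^ (k+1) * (1 - l)⁻¹) :=
      (hasSum_geometric_of_lt_one hl0.le hl1).mul_left _
    rw [← Real.norm_eq_abs]
    refine tsum_of_norm_bounded (f := fun n => F (n + (k+1))) hgs ?_
    intro n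
    rw [Real.norm_eq_abs, hF, abs_mul, abs_pow, abs_of_nonneg hl0.le]
    have h1 : |i (n + (k+1)) - j (n + (k+1))| ≤ 2 := by
      have ha := hi.abs_le (n + (k+1)); have hb := hj.abs_le (n + (k+1))
      have := abs_sub (i (n + (k+1))) (j (n + (k+1)))
      linarith
    have h2 : l ^ (n + (k+1)) = l ^ (k+1) * l ^ n := by rw [pow_add]; ring
    rw [h2]
    have h3 : (0:ℝ) ≤ l ^ (k+1) * l ^ n := by positivity
    nlinarith [abs_nonneg (i (n + (k+1)) - j (n + (k+1))), pow_nonneg hl0.le (k+1),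
      pow_nonneg hl0.le n, mul_nonneg (pow_nonneg hl0.le (k+1)) (pow_nonneg hl0.le n)]
  have hsum : l ^ k - 2 * l ^ (k+1) * (1 - l)⁻¹ ≤ |∑' n, F n| := by
    have : |F k| - |∑' n, F (n + (k+1))| ≤ |∑' n, F n| := by
      calc |F k| - |∑' n, F (n + (k+1))| ≤ |F k + ∑' n, F (n + (k+1))| := by
            have := abs_add_le (F k + ∑' n, F (n + (k+1))) (-(∑' n, F (n + (k+1))))
            simp at this
            linarith [abs_sub_abs_le_abs_sub (F k + ∑' n, F (n + (k+1))) (∑' n, F (n + (k+1))),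
              abs_add_le (F k) (∑' n, F (n + (k+1)))]
      _ = |∑' n, F n| := by rw [← hsplit, hhead]
    linarith [hFk]
  have h1l : (0:ℝ) < 1 - l := by linarith
  rw [hdiff, abs_mul, abs_of_nonneg h1l.le]
  have key : (1 - l) * (l ^ k - 2 * l ^ (k + 1) * (1 - l)⁻¹) = l ^ k * (1 - 3 * l) := by
    field_simp
    ring
  calc l ^ k * (1 - 3 * l) = (1 - l) * (l ^ k - 2 * l ^ (k + 1) * (1 - l)⁻¹) := key.symm
  _ ≤ (1 - l) * |∑' n, F n| := mul_le_mul_of_nonneg_left hsum h1l.le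

lemma pow_sub_pow_abs_le {d l l' : ℝ} (hd : 0 ≤ d) (hl : l ∈ Set.Icc 0 d) (hl' : l' ∈ Set.Icc 0 d)
    (n : ℕ) : |l ^ n - l' ^ n| ≤ n * d ^ (n - 1) * |l - l'| := by
  rw [← geom_sum₂_mul l l' n, abs_mul]
  have hbound : |∑ i ∈ Finset.range n, l ^ i * l' ^ (n - 1 - i)| ≤ n * d ^ (n - 1) := by
    calc |∑ i ∈ Finset.range n, l ^ i * l' ^ (n - 1 - i)|
        ≤ ∑ i ∈ Finset.range n, |l ^ i * l' ^ (n - 1 - i)| := Finset.abs_sum_le_sum_abs _ _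
      _ ≤ ∑ _i ∈ Finset.range n, d ^ (n - 1) := by
          apply Finset.sum_le_sum
          intro i hi
          have hi' : i < n := Finset.mem_range.mp hi
          have h1 : |l ^ i * l' ^ (n - 1 - i)| = l ^ i * l' ^ (n - 1 - i) := by
            rw [abs_of_nonneg]
            exact mul_nonneg (pow_nonneg hl.1 _) (pow_nonneg hl'.1 _)
          rw [h1]
          have h2 : l ^ i * l' ^ (n - 1 - i) ≤ d ^ i * d ^ (n - 1 - i) :=
            mul_le_mul (pow_le_pow_left₀ hl.1 hl.2 _) (pow_le_pow_left₀ hl'.1 hl'.2 _)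
              (pow_nonneg hl'.1 _) (pow_nonneg hd _)
          have h3 : d ^ i * d ^ (n - 1 - i) = d ^ (n - 1) := by
            rw [← pow_add]
            congr 1
            omega
          linarith
      _ = n * d ^ (n - 1) := by rw [Finset.sum_const, Finset.card_range]; ring
  have h0 : (0:ℝ) ≤ |l - l'| := abs_nonneg _
  exact mul_le_mul_of_nonneg_right hbound h0

lemma lip {i : ℕ → ℝ} (hi : IsCoding i) {d l l' : ℝ} (hd0 : 0 < d) (hd1 : d < 1)
    (hl : l ∈ Set.Icc 0 d) (hl' : l' ∈ Set.Icc 0 d) :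
    |PiFun i l - PiFun i l'| ≤ ((1 - d)⁻¹ + (1 - d)⁻¹ * (1 - d)⁻¹) * |l - l'| := by
  have hd1' : (0:ℝ) < 1 - d := by linarith
  have hgeo : ∀ x : ℝ, x ∈ Set.Icc 0 d → |∑' n : ℕ, i n * x ^ n| ≤ (1 - d)⁻¹ := by
    intro x hx
    have hx1 : x < 1 := lt_of_le_of_lt hx.2 hd1
    have hgs : HasSum (fun n : ℕ => x ^ n) (1 - x)⁻¹ := hasSum_geometric_of_lt_one hx.1 hx1
    have h1 : |∑' n : ℕ, i n * x ^ n| ≤ (1 - x)⁻¹ := by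
      rw [← Real.norm_eq_abs]
      refine tsum_of_norm_bounded hgs ?_
      intro n
      rw [Real.norm_eq_abs, abs_mul, abs_pow, abs_of_nonneg hx.1]
      have := hi.abs_le n
      nlinarith [pow_nonneg hx.1 n, abs_nonneg (i n)]
    have h2 : (1 - x)⁻¹ ≤ (1 - d)⁻¹ := by
      apply inv_anti₀ hd1'
      linarith [hx.2]
    linarith
  have hsum : ∀ x : ℝ, x ∈ Set.Icc 0 d → Summable fun n : ℕ => i n * x ^ n := fun x hx =>
    summable_coding hi.abs_le hx.1 (lt_of_le_of_lt hx.2 hd1)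
  -- bound on |S l - S l'|
  have hSS : |(∑' n : ℕ, i n * l ^ n) - ∑' n : ℕ, i n * l' ^ n|
      ≤ (1 - d)⁻¹ * (1 - d)⁻¹ * |l - l'| := by
    have hsub : (∑' n : ℕ, i n * l ^ n) - ∑' n : ℕ, i n * l' ^ n
        = ∑' n : ℕ, i n * (l ^ n - l' ^ n) := by
      rw [← Summable.tsum_sub (hsum l hl) (hsum l' hl')]
      exact tsum_congr fun n => by ring
    have hgs0 : HasSum (fun n : ℕ => (n : ℝ) * d ^ n) (d / (1 - d) ^ 2) := by
      have := hasSum_coe_mul_geometric_of_norm_lt_one (𝕜 := ℝ) (r := d)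
        (by rw [Real.norm_eq_abs, abs_of_nonneg hd0.le]; exact hd1)
      simpa using this
    have hfun : (fun n : ℕ => (n : ℝ) * d ^ (n - 1)) = fun n : ℕ => ((n : ℝ) * d ^ n) / d := by
      funext n
      cases n with
      | zero => simp
      | succ m =>
        have hm : m + 1 - 1 = m := rfl
        rw [hm, pow_succ]
        field_simp
    have hgs1 : HasSum (fun n : ℕ => (n : ℝ) * d ^ (n - 1)) ((d / (1 - d) ^ 2) / d) := by
      rw [hfun]
      exact hgs0.div_const d
    have hgs2 : HasSum (fun n : ℕ => ((n : ℝ) * d ^ (n - 1)) * |l - l'|)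
        (((d / (1 - d) ^ 2) / d) * |l - l'|) := hgs1.mul_right _
    have hb : |∑' n : ℕ, i n * (l ^ n - l' ^ n)| ≤ ((d / (1 - d) ^ 2) / d) * |l - l'| := by
      rw [← Real.norm_eq_abs]
      refine tsum_of_norm_bounded hgs2 ?_
      intro n
      rw [Real.norm_eq_abs, abs_mul]
      have h1 := pow_sub_pow_abs_le hd0.le hl hl' n
      have h2 := hi.abs_le n
      have h3 : (0:ℝ) ≤ |l ^ n - l' ^ n| := abs_nonneg _
      have h4 : |i n| * |l ^ n - l' ^ n| ≤ 1 * |l ^ n - l' ^ n| :=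
        mul_le_mul_of_nonneg_right h2 h3
      calc |i n| * |l ^ n - l' ^ n| ≤ |l ^ n - l' ^ n| := by linarith
        _ ≤ (n : ℝ) * d ^ (n - 1) * |l - l'| := h1
    have heq : (d / (1 - d) ^ 2) / d = (1 - d)⁻¹ * (1 - d)⁻¹ := by
      field_simp
    rw [hsub]
    calc |∑' n : ℕ, i n * (l ^ n - l' ^ n)| ≤ ((d / (1 - d) ^ 2) / d) * |l - l'| := hb
      _ = (1 - d)⁻¹ * (1 - d)⁻¹ * |l - l'| := by rw [heq]
  -- assemble
  set S : ℝ → ℝ := fun x => ∑' n : ℕ, i n * x ^ n with hSdef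
  have hPi : ∀ x : ℝ, PiFun i x = (1 - x) * S x := fun x => rfl
  have hdecomp : PiFun i l - PiFun i l' = (1 - l) * (S l - S l') + (l' - l) * S l' := by
    rw [hPi, hPi]; ring
  have h1l : 0 ≤ 1 - l := by have := hl.2; linarith
  have h1l1 : 1 - l ≤ 1 := by have := hl.1; linarith
  have e1 : |(1 - l) * (S l - S l')| ≤ (1 - d)⁻¹ * (1 - d)⁻¹ * |l - l'| := by
    rw [abs_mul, abs_of_nonneg h1l]
    have := hSS
    nlinarith [abs_nonneg (S l - S l')]
  have e2 : |(l' - l) * S l'| ≤ (1 - d)⁻¹ * |l - l'| := by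
    rw [abs_mul]
    have h5 := hgeo l' hl'
    have h6 : |l' - l| = |l - l'| := abs_sub_comm _ _
    rw [h6]
    have := abs_nonneg (l - l')
    nlinarith [abs_nonneg (S l')]
  calc |PiFun i l - PiFun i l'| = |(1 - l) * (S l - S l') + (l' - l) * S l'| := by rw [hdecomp]
    _ ≤ |(1 - l) * (S l - S l')| + |(l' - l) * S l'| := abs_add_le _ _
    _ ≤ (1 - d)⁻¹ * (1 - d)⁻¹ * |l - l'| + (1 - d)⁻¹ * |l - l'| := add_le_add e1 e2
    _ = ((1 - d)⁻¹ + (1 - d)⁻¹ * (1 - d)⁻¹) * |l - l'| := by ring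

lemma key {t : ℝ} (ht0 : 0 < t) (ht1 : t < 1) {c d : ℝ} (hc : 0 < c) (hcd : c < d)
    (hd : d < 1/3)
    (h : ∀ l ∈ Set.Icc c d, ∃ i, IsCoding i ∧ PiFun i l = t) : False := by
  classical
  have hd1 : d < 1 := by linarith
  have h3d : 0 < 1 - 3 * d := by linarith
  have h' : ∀ l : ℝ, ∃ i, IsCoding i ∧ (l ∈ Set.Icc c d → PiFun i l = t) := by
    intro l
    by_cases hl : l ∈ Set.Icc c d
    · obtain ⟨i, h1, h2⟩ := h l hl; exact ⟨i, h1, fun _ => h2⟩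
    · exact ⟨fun _ => 0, fun n => Or.inr (Or.inl rfl), fun hl' => absurd hl' hl⟩
  choose I hIcod hIval using h'
  set K : ℝ := (1 - d)⁻¹ + (1 - d)⁻¹ * (1 - d)⁻¹ with hKdef
  have hK0 : 0 < K := by
    have h1 : 0 < (1 - d)⁻¹ := inv_pos.mpr (by linarith)
    rw [hKdef]
    nlinarith
  have hsubIcc : Set.Icc c d ⊆ Set.Icc 0 d := Set.Icc_subset_Icc (le_of_lt hc) le_rfl
  -- local constancy of digits
  have step : ∀ m : ℕ, ∀ l ∈ Set.Icc c d, ∀ l' ∈ Set.Icc c d,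
      |l - l'| < c ^ m * (1 - 3 * d) / K → ∀ k, k ≤ m → I l k = I l' k := by
    intro m l hl l' hl' hnear k hkm
    by_contra hne
    have hex : ∃ k, I l k ≠ I l' k := ⟨k, hne⟩
    set k0 := Nat.find hex with hk0def
    have hk0 : I l k0 ≠ I l' k0 := Nat.find_spec hex
    have hlt : ∀ n, n < k0 → I l n = I l' n := fun n hn => not_not.mp (Nat.find_min hex hn)
    have hk0le : k0 ≤ m := le_trans (Nat.find_min' hex hne) hkm
    have hl0 : 0 < l := lt_of_lt_of_le hc hl.1
    have hl3 : l < 1/3 := lt_of_le_of_lt hl.2 hd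
    have hsep := sep (hIcod l) (hIcod l') hlt hk0 hl0 hl3
    have hbound : c ^ m * (1 - 3 * d) ≤ l ^ k0 * (1 - 3 * l) := by
      have h1 : c ^ m ≤ c ^ k0 := pow_le_pow_of_le_one (le_of_lt hc) (by linarith) hk0le
      have h2 : c ^ k0 ≤ l ^ k0 := pow_le_pow_left₀ (le_of_lt hc) hl.1 k0
      have h3 : 1 - 3 * l ≥ 1 - 3 * d := by have := hl.2; linarith
      have h4 : (0:ℝ) < c ^ m := pow_pos hc m
      have h5 : (0:ℝ) < l ^ k0 := pow_pos hl0 k0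
      nlinarith
    have hlip := lip (hIcod l') (lt_trans hc hcd) hd1 (hsubIcc hl') (hsubIcc hl)
    have hval1 : PiFun (I l) l = t := hIval l hl
    have hval2 : PiFun (I l') l' = t := hIval l' hl'
    have heq1 : |PiFun (I l) l - PiFun (I l') l| = |PiFun (I l') l' - PiFun (I l') l| := by
      rw [hval1, hval2]
    have habs : |l' - l| = |l - l'| := abs_sub_comm _ _
    have hKmul : K * |l - l'| < c ^ m * (1 - 3 * d) := by
      rw [lt_div_iff₀ hK0] at hnear
      calc K * |l - l'| = |l - l'| * K := mul_comm _ _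
      _ < c ^ m * (1 - 3 * d) := hnear
    have : c ^ m * (1 - 3 * d) ≤ K * |l - l'| := by
      calc c ^ m * (1 - 3 * d) ≤ l ^ k0 * (1 - 3 * l) := hbound
      _ ≤ |PiFun (I l) l - PiFun (I l') l| := hsep
      _ = |PiFun (I l') l' - PiFun (I l') l| := heq1
      _ ≤ K * |l' - l| := hlip
      _ = K * |l - l'| := by rw [habs]
    linarith
  -- continuity of digit functions
  have hcont : ∀ m : ℕ, ContinuousOn (fun l => I l m) (Set.Icc c d) := by
    intro m l0 hl0
    set δ := c ^ m * (1 - 3 * d) / K with hδdef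
    have hδ : 0 < δ := by positivity
    apply ContinuousWithinAt.congr_of_eventuallyEq
      (continuousWithinAt_const (b := I l0 m))
    · have hball : Metric.ball l0 δ ∈ nhdsWithin l0 (Set.Icc c d) :=
        mem_nhdsWithin_of_mem_nhds (Metric.ball_mem_nhds _ hδ)
      filter_upwards [hball, self_mem_nhdsWithin] with x hx1 hx2
      have hdist : |x - l0| < δ := by
        rw [Metric.mem_ball, Real.dist_eq] at hx1; exact hx1
      exact step m x hx2 l0 hl0 hdist m le_rfl
    · rfl
  -- digits are globally constant
  have hconst : ∀ m : ℕ, ∀ l ∈ Set.Icc c d, I l m = I c m := by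
    intro m l hl
    by_contra hne
    have hccd : c ∈ Set.Icc c d := Set.left_mem_Icc.mpr (le_of_lt hcd)
    have hsub2 : Set.uIcc c l ⊆ Set.Icc c d := by
      rw [Set.uIcc_of_le hl.1]
      exact Set.Icc_subset_Icc le_rfl hl.2
    have hcont2 : ContinuousOn (fun x => I x m) (Set.uIcc c l) := (hcont m).mono hsub2
    have hIVT := intermediate_value_uIcc hcont2
    have hv : max (I c m) (I l m) - 1/2 ∈ Set.uIcc (I c m) (I l m) := by
      have h1 : 1 ≤ |I c m - I l m| := by
        rcases hIcod c m with h1 | h1 | h1 <;> rcases hIcod l m with h2 | h2 | h2 <;>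
          rw [h1, h2] <;> first
            | (exfalso; exact hne (h2.trans h1.symm))
            | norm_num
      rcases le_or_gt (I c m) (I l m) with hcl | hcl
      · rw [max_eq_right hcl, Set.uIcc_of_le hcl, Set.mem_Icc]
        rcases abs_cases (I c m - I l m) with ⟨he, _⟩ | ⟨he, _⟩ <;> constructor <;> linarith
      · rw [max_eq_left (le_of_lt hcl), Set.uIcc_of_ge (le_of_lt hcl), Set.mem_Icc]
        rcases abs_cases (I c m - I l m) with ⟨he, _⟩ | ⟨he, _⟩ <;> constructor <;> linarith
    obtain ⟨x, hx, hfx⟩ := hIVT hv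
    have hxcd : x ∈ Set.Icc c d := hsub2 hx
    rcases hIcod c m with ha | ha | ha <;> rcases hIcod l m with hb | hb | hb <;>
      rcases hIcod x m with hc3 | hc3 | hc3 <;>
      norm_num [ha, hb, hc3] at hfx
  -- hence a single coding works on all of [c,d]
  set j : ℕ → ℝ := I c with hjdef
  have hjcod : IsCoding j := hIcod c
  have hPiconst : ∀ l ∈ Set.Icc c d, PiFun j l = t := by
    intro l hl
    have : I l = j := funext fun m => hconst m l hl
    rw [← this]
    exact hIval l hl
  -- power series argument
  set coef : ℕ → ℝ := fun n => j n - t with hcoefdef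
  set p : FormalMultilinearSeries ℝ ℝ ℝ := FormalMultilinearSeries.ofScalars ℝ coef with hpdef
  have hnorm : ∀ n, ‖p n‖ ≤ 2 := by
    intro n
    rw [hpdef, FormalMultilinearSeries.ofScalars_norm]
    rw [Real.norm_eq_abs, hcoefdef]
    have h1 := hjcod.abs_le n
    have h2 : |t| ≤ 1 := by rw [abs_of_pos ht0]; linarith
    calc |j n - t| ≤ |j n| + |t| := abs_sub _ _
      _ ≤ 2 := by linarith
  have hrad : (1 : ENNReal) ≤ p.radius := by
    have h2 : ∀ n : ℕ, ‖p n‖ * ((1 : NNReal) : ℝ) ^ n ≤ 2 := fun n => by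
      simpa using hnorm n
    exact_mod_cast p.le_radius_of_bound 2 h2
  have hr0 : 0 < p.radius := lt_of_lt_of_le zero_lt_one hrad
  have hball := p.hasFPowerSeriesOnBall hr0
  have hana : AnalyticOnNhd ℝ p.sum (Metric.eball 0 p.radius) := hball.analyticOnNhd
  have hsub1 : Set.Ioo (-1:ℝ) 1 ⊆ Metric.eball (0:ℝ) p.radius := by
    intro x hx
    rw [mem_emetric_ball_zero_iff]
    refine lt_of_lt_of_le ?_ hrad
    rw [← ENNReal.coe_one, enorm_eq_nnnorm, ENNReal.coe_lt_coe, ← NNReal.coe_lt_coe, coe_nnnorm,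
      Real.norm_eq_abs, NNReal.coe_one]
    exact abs_lt.mpr ⟨hx.1, hx.2⟩
  have hana2 : AnalyticOnNhd ℝ p.sum (Set.Ioo (-1:ℝ) 1) := fun x hx => hana x (hsub1 hx)
  have hsum_eq : ∀ x : ℝ, p.sum x = ∑' n : ℕ, coef n * x ^ n := by
    intro x
    have h1 := FormalMultilinearSeries.ofScalars_sum_eq (E := ℝ) coef x
    simpa [FormalMultilinearSeries.ofScalarsSum, smul_eq_mul] using h1
  set z₀ : ℝ := (c + d)/2 with hz₀def
  have hz₀ : z₀ ∈ Set.Ioo c d := by constructor <;> simp only [hz₀def] <;> linarith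
  have hev : p.sum =ᶠ[nhds z₀] 0 := by
    have hmem : Set.Ioo c d ∈ nhds z₀ := Ioo_mem_nhds hz₀.1 hz₀.2
    filter_upwards [hmem] with x hx
    have hx' : x ∈ Set.Icc c d := Set.Ioo_subset_Icc_self hx
    have hx0 : 0 < x := lt_of_lt_of_le hc hx'.1
    have hx1 : x < 1 := lt_of_le_of_lt hx'.2 hd1
    have h1x : (1:ℝ) - x ≠ 0 := by intro hcontra; linarith [sub_eq_zero.mp hcontra]
    have hPi := hPiconst x hx'
    rw [PiFun] at hPi
    have hS : (∑' n : ℕ, j n * x ^ n) = t * (1 - x)⁻¹ := by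
      rw [eq_mul_inv_iff_mul_eq₀ h1x]
      rw [mul_comm] at hPi
      exact hPi
    have hsj : Summable fun n : ℕ => j n * x ^ n := summable_coding hjcod.abs_le hx0.le hx1
    have hst : Summable fun n : ℕ => t * x ^ n :=
      (summable_geometric_of_lt_one hx0.le hx1).mul_left t
    have hgeom : (∑' n : ℕ, t * x ^ n) = t * (1 - x)⁻¹ := by
      rw [tsum_mul_left, tsum_geometric_of_lt_one hx0.le hx1]
    have : p.sum x = (∑' n : ℕ, j n * x ^ n) - ∑' n : ℕ, t * x ^ n := by
      rw [hsum_eq, ← Summable.tsum_sub hsj hst]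
      exact tsum_congr fun n => by rw [hcoefdef]; ring
    rw [Pi.zero_apply, this, hS, hgeom, sub_self]
  have hz₀' : z₀ ∈ Set.Ioo (-1:ℝ) 1 := by
    constructor <;> simp only [hz₀def] <;> [linarith; linarith [hd]]
  have hEq := hana2.eqOn_zero_of_preconnected_of_eventuallyEq_zero isPreconnected_Ioo hz₀' hev
  have h0mem : (0:ℝ) ∈ Set.Ioo (-1:ℝ) 1 := by norm_num
  have h0 : p.sum 0 = 0 := hEq h0mem
  have hc0 : coef 0 = 0 := by
    rw [hsum_eq] at h0
    have h1 : ∑' (n : ℕ), coef n * 0 ^ n = coef 0 * 0 ^ 0 :=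
      tsum_eq_single 0 fun n hn => by rw [zero_pow hn, mul_zero]
    rw [h1] at h0
    simpa using h0
  have : j 0 = t := by
    have := hc0
    rw [hcoefdef] at this
    simp at this
    linarith [this]
  rcases hjcod 0 with hj0 | hj0 | hj0 <;> rw [hj0] at this <;> linarith

theorem stmt14 (t : ℝ) (ht : t ∈ Set.Ioo (0 : ℝ) 1) (ht3 : t ≠ 1/3) :
    interior (Lam t) = ∅ ∧
    ∀ l₁ ∈ Lam t, ∀ l₂ ∈ Lam t, l₁ < l₂ → ∃ m ∈ Set.Ioo l₁ l₂, m ∉ Lam t := by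
  obtain ⟨ht0, ht1⟩ := ht
  have hint : interior (Lam t) = ∅ := by
    by_contra hne
    obtain ⟨l0, hl0⟩ := Set.nonempty_iff_ne_empty.mpr hne
    obtain ⟨ε, hε, hball⟩ := Metric.isOpen_iff.mp isOpen_interior l0 hl0
    have hIoo : Set.Ioo (l0 - ε) (l0 + ε) ⊆ Lam t := by
      intro x hx
      apply interior_subset
      apply hball
      rw [Metric.mem_ball, Real.dist_eq]
      rcases hx with ⟨hx1, hx2⟩
      rw [abs_lt]
      constructor <;> linarith
    have hmem : ∀ x, x ∈ Set.Ioo (l0 - ε) (l0 + ε) → 0 < x ∧ x ≤ 1/3 := by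
      intro x hx
      exact (hIoo hx).1
    -- l0 + ε/2 ∈ Lam t, hence l0 < 1/3
    have hl0up : l0 + ε/2 ≤ 1/3 := by
      have := hmem (l0 + ε/2) ⟨by linarith, by linarith⟩
      linarith [this.2]
    have hl03 : l0 < 1/3 := by linarith
    set c : ℝ := l0 - ε/2 with hcdef
    set d : ℝ := l0 with hddef
    have hc0 : 0 < c := (hmem c ⟨by simp [hcdef]; linarith, by simp [hcdef]; linarith⟩).1
    have hcd : c < d := by simp [hcdef, hddef]; linarith
    apply key ht0 ht1 hc0 hcd hl03
    intro l hl
    have hlmem : l ∈ Set.Ioo (l0 - ε) (l0 + ε) := by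
      rcases hl with ⟨h1, h2⟩
      constructor
      · simp only [hcdef] at h1; linarith
      · simp only [hddef] at h2; linarith
    have hlLam := hIoo hlmem
    have hl1 : l < 1 := by linarith [hlLam.1.2]
    exact exists_coding hlLam.1.1 hl1 hlLam.2
  refine ⟨hint, ?_⟩
  intro l₁ h₁ l₂ h₂ hlt
  by_contra hcon
  push_neg at hcon
  have hsub : Set.Ioo l₁ l₂ ⊆ Lam t := fun m hm => hcon m hm
  have hsubint : Set.Ioo l₁ l₂ ⊆ interior (Lam t) := interior_maximal hsub isOpen_Ioo
  have hmid : (l₁ + l₂)/2 ∈ Set.Ioo l₁ l₂ := ⟨by linarith, by linarith⟩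
  have := hsubint hmid
  rw [hint] at this
  exact this
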